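/- Let ξ ∈ (0,1). Then Lb_ξ(θ) · θ^{3/4 − (1−ξ)/2} · exp(2θ^{3/2}/3) tends to √π/2 as θ → +∞; equivalently, Lb_ξ(θ) = (√π/2) · θ^{(1−ξ)/2 − 3/4} · exp(−2θ^{3/2}/3) · (1 + o(1)) as θ → +∞. -/

import Mathlib

open Real Filter

section LbAux
open Complex MeasureTheory Set

noncomputable def ff (ξ θ : ℝ) (z : ℂ) : ℂ :=
  Complex.exp (Complex.I * (z^3/3 + θ*z)) * z ^ (-ξ : ℂ)

lemma arg_decomp (θ x y : ℝ) :
    Complex.I*(((x:ℂ) + (y:ℂ)*Complex.I)^3/3 + (θ:ℂ)*((x:ℂ) + (y:ℂ)*Complex.I))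
      = ((-(x^2*y - y^3/3 + θ*y) : ℝ) : ℂ) + ((x^3/3 - x*y^2 + θ*x : ℝ) : ℂ)*Complex.I := by
  apply Complex.ext <;> simp [pow_succ] <;> ring

lemma abs_ff (ξ θ x y : ℝ) (hz : (x:ℂ) + (y:ℂ)*Complex.I ≠ 0) :
    ‖ff ξ θ ((x:ℂ) + (y:ℂ)*Complex.I)‖
      = Real.exp (-(x^2*y - y^3/3 + θ*y)) * ‖(x:ℂ)+(y:ℂ)*Complex.I‖ ^ (-ξ) := by
  rw [ff, norm_mul, arg_decomp, Complex.norm_cpow_of_ne_zero hz]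
  simp [Complex.norm_exp, ← Complex.ofReal_pow]

lemma abs_ff_real (ξ θ x : ℝ) (hx : 0 < x) :
    ‖ff ξ θ (x:ℂ)‖ = x ^ (-ξ) := by
  have h : (x:ℂ) = (x:ℂ) + (0:ℝ)*Complex.I := by simp
  rw [h, abs_ff ξ θ x 0 (by simpa using (by exact_mod_cast hx.ne' : (x:ℂ) ≠ 0))]
  simp [Complex.norm_real, abs_of_pos hx]

lemma abs_z_ge_x (x y : ℝ) : x ≤ ‖(x:ℂ)+(y:ℂ)*Complex.I‖ := by
  calc x ≤ |x| := le_abs_self x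
  _ = ‖(x:ℂ)‖ := (Complex.norm_real x).symm
  _ ≤ _ := by
      simpa using Complex.abs_re_le_norm ((x:ℂ)+(y:ℂ)*Complex.I)

lemma abs_z_ge_y (x y : ℝ) : y ≤ ‖(x:ℂ)+(y:ℂ)*Complex.I‖ := by
  calc y ≤ |y| := le_abs_self y
  _ ≤ _ := by
      simpa using Complex.abs_im_le_norm ((x:ℂ)+(y:ℂ)*Complex.I)

-- bound on vertical segments, general x ≥ 0
lemma bound_vert (ξ θ x y : ℝ) (hξ : 0 < ξ) (hx : 0 ≤ x) (hy : 0 < y) (hyb : y ≤ Real.sqrt θ) :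
    ‖ff ξ θ ((x:ℂ) + (y:ℂ)*Complex.I)‖ ≤ Real.exp (-(x^2*y)) * y ^ (-ξ) := by
  have hθ : 0 < θ := Real.sqrt_pos.mp (lt_of_lt_of_le hy hyb)
  have hz : (x:ℂ) + (y:ℂ)*Complex.I ≠ 0 := by
    intro h
    have := congrArg Complex.im h
    simp at this
    exact hy.ne' this
  rw [abs_ff ξ θ x y hz]
  have hy2 : y^2 ≤ θ := by
    have := Real.sq_sqrt hθ.le
    nlinarith [hyb, hy.le]
  have h1 : Real.exp (-(x^2*y - y^3/3 + θ*y)) ≤ Real.exp (-(x^2*y)) := by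
    apply Real.exp_le_exp.mpr
    nlinarith [hy.le]
  have h2 : ‖(x:ℂ)+(y:ℂ)*Complex.I‖ ^ (-ξ) ≤ y ^ (-ξ) :=
    Real.rpow_le_rpow_of_nonpos hy (abs_z_ge_y x y) (neg_nonpos.mpr hξ.le)
  exact mul_le_mul h1 h2 (Real.rpow_nonneg (norm_nonneg _) _) (Real.exp_pos _).le

example : True := trivial

lemma bound_top (ξ θ x : ℝ) (hξ : 0 < ξ) (hθ : 0 < θ) (hx : 0 ≤ x) :
    ‖ff ξ θ ((x:ℂ) + (Real.sqrt θ : ℝ)*Complex.I)‖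
      ≤ (Real.exp (-(2/3)*(θ*Real.sqrt θ)) * Real.sqrt θ ^ (-ξ)) * Real.exp (-(Real.sqrt θ * x^2)) := by
  set b := Real.sqrt θ with hb
  have hbpos : 0 < b := Real.sqrt_pos.mpr hθ
  have hb2 : b^2 = θ := Real.sq_sqrt hθ.le
  have hz : (x:ℂ) + (b:ℝ)*Complex.I ≠ 0 := by
    intro h
    have := congrArg Complex.im h
    simp at this
    exact hbpos.ne' this
  rw [abs_ff ξ θ x b hz]
  have he : -(x^2*b - b^3/3 + θ*b) = (-(2/3)*(θ*b)) + (-(b*x^2)) := by nlinarith [hb2]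
  rw [he, Real.exp_add]
  have h2 : ‖(x:ℂ)+(b:ℝ)*Complex.I‖ ^ (-ξ) ≤ b ^ (-ξ) :=
    Real.rpow_le_rpow_of_nonpos hbpos (abs_z_ge_y x b) (neg_nonpos.mpr hξ.le)
  calc Real.exp (-(2/3)*(θ*b)) * Real.exp (-(b*x^2)) * ‖(x:ℂ)+(b:ℝ)*Complex.I‖ ^ (-ξ)
      ≤ Real.exp (-(2/3)*(θ*b)) * Real.exp (-(b*x^2)) * b ^ (-ξ) := by
        apply mul_le_mul_of_nonneg_left h2 (by positivity)
    _ = Real.exp (-(2/3)*(θ*b)) * b ^ (-ξ) * Real.exp (-(b*x^2)) := by ring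

lemma cont_cpow_ofReal (ξ : ℝ) : ContinuousOn (fun x : ℝ => (x:ℂ) ^ (-ξ:ℂ)) (Set.Ioi 0) := by
  intro x hx
  have : ContinuousAt (fun x : ℝ => (x:ℂ) ^ (-ξ:ℂ)) x := by
    apply (continuousAt_cpow_const _).comp Complex.continuous_ofReal.continuousAt
    exact Complex.mem_slitPlane_iff.mpr (Or.inl (by simpa using hx))
  exact this.continuousWithinAt

lemma cont_exp_part (ξ θ : ℝ) : Continuous (fun x : ℝ => Complex.exp (Complex.I * (((x:ℂ))^3/3 + (θ:ℂ)*(x:ℂ)))) := by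
  fun_prop

lemma contOn_ff_real (ξ θ : ℝ) : ContinuousOn (fun x : ℝ => ff ξ θ (x:ℂ)) (Set.Ioi 0) :=
  ((cont_exp_part ξ θ).continuousOn).mul (cont_cpow_ofReal ξ)

lemma intInt_real (ξ θ T : ℝ) (hξ0 : 0 < ξ) (hξ1 : ξ < 1) (hT : 0 ≤ T) :
    IntervalIntegrable (fun x : ℝ => ff ξ θ (x:ℂ)) volume 0 T := by
  rw [intervalIntegrable_iff_integrableOn_Ioc_of_le hT]
  apply Integrable.mono' ((intervalIntegral.intervalIntegrable_rpow'
      (show (-1:ℝ) < -ξ by linarith)).1.mono_set (by intro x hx; exact hx))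
  · exact ((contOn_ff_real ξ θ).mono (Set.Ioc_subset_Ioi_self)).aestronglyMeasurable measurableSet_Ioc
  · filter_upwards [ae_restrict_mem measurableSet_Ioc] with x hx
    rw [abs_ff_real ξ θ x hx.1]

lemma cont_ff_line (ξ θ x : ℝ) (hx : 0 < x) :
    Continuous (fun y : ℝ => ff ξ θ ((x:ℂ) + (y:ℂ)*Complex.I)) := by
  apply Continuous.mul
  · fun_prop
  · rw [continuous_iff_continuousAt]
    intro y
    apply (continuousAt_cpow_const _).comp (by fun_prop)
    exact Complex.mem_slitPlane_iff.mpr (Or.inl (by simpa using hx))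

lemma cont_ff_vert0 (ξ θ : ℝ) : ContinuousOn (fun y : ℝ => ff ξ θ ((0:ℝ) + (y:ℂ)*Complex.I)) (Set.Ioi 0) := by
  apply ContinuousOn.mul
  · fun_prop
  · intro y hy
    apply ContinuousAt.continuousWithinAt
    apply (continuousAt_cpow_const _).comp (by fun_prop)
    have hy' : (0:ℝ) < y := hy
    exact Complex.mem_slitPlane_iff.mpr (Or.inr (by simp [hy'.ne']))

lemma intInt_vert0 (ξ θ : ℝ) (hξ0 : 0 < ξ) (hξ1 : ξ < 1) (hθ : 0 < θ) :
    IntervalIntegrable (fun y : ℝ => ff ξ θ ((0:ℝ) + (y:ℂ)*Complex.I)) volume 0 (Real.sqrt θ) := by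
  have hb : (0:ℝ) ≤ Real.sqrt θ := Real.sqrt_nonneg θ
  rw [intervalIntegrable_iff_integrableOn_Ioc_of_le hb]
  apply Integrable.mono' ((intervalIntegral.intervalIntegrable_rpow'
      (show (-1:ℝ) < -ξ by linarith)).1.mono_set (by intro x hx; exact hx))
  · exact ((cont_ff_vert0 ξ θ).mono (Set.Ioc_subset_Ioi_self)).aestronglyMeasurable measurableSet_Ioc
  · filter_upwards [ae_restrict_mem measurableSet_Ioc] with y hy
    have := bound_vert ξ θ 0 y hξ0 le_rfl hy.1 hy.2
    simp only [Complex.ofReal_zero] at this ⊢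
    calc ‖ff ξ θ (0 + (y:ℂ)*Complex.I)‖ ≤ Real.exp (-(0^2*y)) * y ^ (-ξ) := this
      _ = y ^ (-ξ) := by norm_num

lemma cont_ff_top (ξ θ : ℝ) (hθ : 0 < θ) :
    Continuous (fun x : ℝ => ff ξ θ ((x:ℂ) + (Real.sqrt θ : ℝ)*Complex.I)) := by
  have hb : (0:ℝ) < Real.sqrt θ := Real.sqrt_pos.mpr hθ
  apply Continuous.mul
  · fun_prop
  · rw [continuous_iff_continuousAt]
    intro x
    apply (continuousAt_cpow_const _).comp (by fun_prop)
    exact Complex.mem_slitPlane_iff.mpr (Or.inr (by simp [hb.ne']))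

lemma integrableOn_ff_top (ξ θ : ℝ) (hξ0 : 0 < ξ) (hθ : 0 < θ) :
    IntegrableOn (fun x : ℝ => ff ξ θ ((x:ℂ) + (Real.sqrt θ : ℝ)*Complex.I)) (Set.Ioi 0) volume := by
  have hb : (0:ℝ) < Real.sqrt θ := Real.sqrt_pos.mpr hθ
  apply Integrable.mono'
    (g := fun x => (Real.exp (-(2/3)*(θ*Real.sqrt θ)) * Real.sqrt θ ^ (-ξ)) * Real.exp (-(Real.sqrt θ) * x^2))
  · exact ((integrable_exp_neg_mul_sq hb).const_mul _).integrableOn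
  · exact (cont_ff_top ξ θ hθ).aestronglyMeasurable.restrict
  · filter_upwards [ae_restrict_mem measurableSet_Ioi] with x hx
    have := bound_top ξ θ x hξ0 hθ (le_of_lt hx)
    simpa [neg_mul] using this

-- rectangle identity for 0 < ε ≤ T
lemma rect_identity (ξ θ : ℝ) (hξ0 : 0 < ξ) (T ε : ℝ) (hε : 0 < ε) (hεT : ε ≤ T) :
    ((∫ x in ε..T, ff ξ θ ((x:ℂ) + (0:ℝ)*Complex.I)) -
      ∫ x in ε..T, ff ξ θ ((x:ℂ) + (Real.sqrt θ:ℝ)*Complex.I)) +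
      Complex.I • (∫ y in (0:ℝ)..(Real.sqrt θ), ff ξ θ ((T:ℂ) + (y:ℂ)*Complex.I)) -
      Complex.I • (∫ y in (0:ℝ)..(Real.sqrt θ), ff ξ θ ((ε:ℂ) + (y:ℂ)*Complex.I)) = 0 := by
  have key := Complex.integral_boundary_rect_eq_zero_of_differentiableOn (ff ξ θ)
    (ε : ℂ) ((T:ℂ) + (Real.sqrt θ:ℝ)*Complex.I) ?_
  · simpa using key
  · intro z hz
    apply DifferentiableAt.differentiableWithinAt
    have hzre : 0 < z.re := by
      rw [Complex.mem_reProdIm] at hz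
      have h1 := hz.1
      simp only [Complex.ofReal_re, Complex.add_re, Complex.mul_re, Complex.I_re,
        Complex.ofReal_im, Complex.I_im] at h1
      rw [Set.uIcc_of_le (by norm_num; exact hεT)] at h1
      have h2 : ε ≤ z.re := by
        have := h1.1
        simpa using this
      linarith
    apply DifferentiableAt.mul
    · apply Complex.differentiableAt_exp.comp
      fun_prop
    · exact (differentiableAt_id.cpow (differentiableAt_const _)
        (Complex.mem_slitPlane_iff.mpr (Or.inl hzre)))

lemma tendsto_int_zero_eps (ξ θ : ℝ) (hξ0 : 0 < ξ) (hξ1 : ξ < 1) :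
    Tendsto (fun ε : ℝ => ∫ x in (0:ℝ)..ε, ff ξ θ (x:ℂ)) (nhdsWithin 0 (Set.Ioi 0)) (nhds 0) := by
  apply squeeze_zero_norm' (a := fun ε : ℝ => ε^(1-ξ)/(1-ξ))
  · filter_upwards [self_mem_nhdsWithin] with ε (hε : (0:ℝ) < ε)
    have hb : ‖∫ x in (0:ℝ)..ε, ff ξ θ (x:ℂ)‖ ≤ |∫ x in (0:ℝ)..ε, x^(-ξ)| := by
      apply intervalIntegral.norm_integral_le_abs_of_norm_le _
        ((intervalIntegral.intervalIntegrable_rpow' (by linarith)))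
      filter_upwards [ae_restrict_mem measurableSet_uIoc] with x hx
      rw [Set.uIoc_of_le hε.le] at hx
      rw [abs_ff_real ξ θ x hx.1]
    refine hb.trans ?_
    rw [integral_rpow (Or.inl (by linarith))]
    rw [Real.zero_rpow (by intro h; nlinarith [h])]
    have h15 : -ξ + 1 = 1 - ξ := by ring
    rw [h15, sub_zero]
    exact le_of_eq (_root_.abs_of_nonneg (div_nonneg (Real.rpow_nonneg hε.le _) (by linarith)))
  · have hc : ContinuousAt (fun ε : ℝ => ε^(1-ξ)) 0 :=
      (Real.continuousAt_rpow_const 0 (1-ξ) (Or.inr (by linarith)))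
    have h0 : (0:ℝ)^(1-ξ) = 0 := Real.zero_rpow (by intro h; nlinarith [h])
    have := (hc.tendsto.mono_left (nhdsWithin_le_nhds (s := Set.Ioi (0:ℝ)))).div_const (1-ξ)
    rw [h0] at this
    simpa using this

lemma tendsto_int_zero_eps_top (ξ θ : ℝ) (hξ0 : 0 < ξ) (hθ : 0 < θ) :
    Tendsto (fun ε : ℝ => ∫ x in (0:ℝ)..ε, ff ξ θ ((x:ℂ) + (Real.sqrt θ:ℝ)*Complex.I))
      (nhdsWithin 0 (Set.Ioi 0)) (nhds 0) := by
  set C := Real.exp (-(2/3)*(θ*Real.sqrt θ)) * Real.sqrt θ ^ (-ξ) with hC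
  have hC0 : 0 ≤ C := by positivity
  apply squeeze_zero_norm' (a := fun ε : ℝ => C * |ε|)
  · filter_upwards [self_mem_nhdsWithin] with ε (hε : (0:ℝ) < ε)
    have hb := intervalIntegral.norm_integral_le_of_norm_le_const
      (C := C) (f := fun x : ℝ => ff ξ θ ((x:ℂ) + (Real.sqrt θ:ℝ)*Complex.I)) (a := 0) (b := ε) ?_
    · simpa using hb
    · intro x hx
      rw [Set.uIoc_of_le hε.le] at hx
      refine (bound_top ξ θ x hξ0 hθ hx.1.le).trans ?_
      rw [hC]
      have h1 : Real.exp (-(Real.sqrt θ * x^2)) ≤ 1 :=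
        Real.exp_le_one_iff.mpr (neg_nonpos.mpr (by positivity))
      calc Real.exp (-(2/3)*(θ*Real.sqrt θ)) * Real.sqrt θ ^ (-ξ) * Real.exp (-(Real.sqrt θ * x^2))
          ≤ Real.exp (-(2/3)*(θ*Real.sqrt θ)) * Real.sqrt θ ^ (-ξ) * 1 :=
            mul_le_mul_of_nonneg_left h1 (by positivity)
        _ = Real.exp (-(2/3)*(θ*Real.sqrt θ)) * Real.sqrt θ ^ (-ξ) := mul_one _
  · have : Tendsto (fun ε : ℝ => C * |ε|) (nhdsWithin 0 (Set.Ioi 0)) (nhds (C * |0|)) := by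
      apply Tendsto.mono_left _ nhdsWithin_le_nhds
      exact (continuous_const.mul (_root_.continuous_abs)).tendsto 0
    simpa using this

lemma tendsto_left_vert (ξ θ : ℝ) (hξ0 : 0 < ξ) (hξ1 : ξ < 1) (hθ : 0 < θ) :
    Tendsto (fun ε : ℝ => ∫ y in (0:ℝ)..(Real.sqrt θ), ff ξ θ ((ε:ℂ) + (y:ℂ)*Complex.I))
      (nhdsWithin 0 (Set.Ioi 0))
      (nhds (∫ y in (0:ℝ)..(Real.sqrt θ), ff ξ θ (((0:ℝ):ℂ) + (y:ℂ)*Complex.I))) := by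
  have hb : (0:ℝ) < Real.sqrt θ := Real.sqrt_pos.mpr hθ
  apply intervalIntegral.tendsto_integral_filter_of_dominated_convergence
    (bound := fun y : ℝ => y^(-ξ))
  · filter_upwards [self_mem_nhdsWithin] with ε (hε : (0:ℝ) < ε)
    exact ((cont_ff_line ξ θ ε hε).aestronglyMeasurable).restrict
  · filter_upwards [self_mem_nhdsWithin] with ε (hε : (0:ℝ) < ε)
    filter_upwards [] with y
    intro hy
    rw [Set.uIoc_of_le hb.le] at hy
    refine (bound_vert ξ θ ε y hξ0 hε.le hy.1 hy.2).trans ?_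
    have h1 : Real.exp (-(ε^2*y)) ≤ 1 := Real.exp_le_one_iff.mpr (by nlinarith [hy.1.le])
    nlinarith [Real.rpow_nonneg hy.1.le (-ξ), Real.exp_pos (-(ε^2*y))]
  · exact intervalIntegral.intervalIntegrable_rpow' (by linarith)
  · filter_upwards [] with y
    intro hy
    rw [Set.uIoc_of_le hb.le] at hy
    have hcont : ContinuousAt (ff ξ θ) (((0:ℝ):ℂ) + (y:ℂ)*Complex.I) := by
      apply ContinuousAt.mul
      · fun_prop
      · apply continuousAt_cpow_const
        exact Complex.mem_slitPlane_iff.mpr (Or.inr (by simp [hy.1.ne']))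
    have hmap : Tendsto (fun ε : ℝ => (ε:ℂ) + (y:ℂ)*Complex.I) (nhdsWithin 0 (Set.Ioi 0))
        (nhds (((0:ℝ):ℂ) + (y:ℂ)*Complex.I)) := by
      apply Tendsto.mono_left _ nhdsWithin_le_nhds
      exact ((Complex.continuous_ofReal.add continuous_const).tendsto 0).congr (by intro x; simp only [Pi.add_apply])
    exact hcont.tendsto.comp hmap

lemma contour_identity (ξ θ T : ℝ) (hξ0 : 0 < ξ) (hξ1 : ξ < 1) (hθ : 0 < θ) (hT : 0 < T) :
    ∫ x in (0:ℝ)..T, ff ξ θ (x:ℂ)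
      = (∫ x in (0:ℝ)..T, ff ξ θ ((x:ℂ) + (Real.sqrt θ:ℝ)*Complex.I))
        - Complex.I • (∫ y in (0:ℝ)..(Real.sqrt θ), ff ξ θ ((T:ℂ) + (y:ℂ)*Complex.I))
        + Complex.I • (∫ y in (0:ℝ)..(Real.sqrt θ), ff ξ θ (((0:ℝ):ℂ) + (y:ℂ)*Complex.I)) := by
  set l := nhdsWithin (0:ℝ) (Set.Ioi 0) with hl
  have hNeBot : l.NeBot := nhdsGT_neBot 0
  -- limit of bottom integrals
  have hbotInt : ∀ ε ∈ Set.Ioo (0:ℝ) T, (∫ x in ε..T, ff ξ θ (x:ℂ))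
      = (∫ x in (0:ℝ)..T, ff ξ θ (x:ℂ)) - ∫ x in (0:ℝ)..ε, ff ξ θ (x:ℂ) := by
    intro ε hε
    have h1 : IntervalIntegrable (fun x : ℝ => ff ξ θ (x:ℂ)) volume 0 ε :=
      (intInt_real ξ θ T hξ0 hξ1 (by linarith [hε.2, hε.1])).mono_set
        (by rw [Set.uIcc_of_le hε.1.le, Set.uIcc_of_le (by linarith [hε.1, hε.2] : (0:ℝ) ≤ T)]
            exact Set.Icc_subset_Icc le_rfl hε.2.le)
    have h2 : IntervalIntegrable (fun x : ℝ => ff ξ θ (x:ℂ)) volume ε T :=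
      (intInt_real ξ θ T hξ0 hξ1 (by linarith [hε.1, hε.2])).mono_set
        (by rw [Set.uIcc_of_le hε.2.le, Set.uIcc_of_le (by linarith [hε.1, hε.2] : (0:ℝ) ≤ T)]
            exact Set.Icc_subset_Icc hε.1.le le_rfl)
    rw [← intervalIntegral.integral_add_adjacent_intervals h1 h2]
    ring
  have hbot : Tendsto (fun ε : ℝ => ∫ x in ε..T, ff ξ θ (x:ℂ)) l
      (nhds (∫ x in (0:ℝ)..T, ff ξ θ (x:ℂ))) := by
    have := tendsto_const_nhds (x := ∫ x in (0:ℝ)..T, ff ξ θ (x:ℂ)) (f := l)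
      |>.sub (tendsto_int_zero_eps ξ θ hξ0 hξ1)
    rw [sub_zero] at this
    apply this.congr'
    filter_upwards [Ioo_mem_nhdsGT_of_mem (by constructor <;> [exact le_rfl; exact hT])] with ε hε
    exact (hbotInt ε hε).symm
  -- limit of top integrals
  have htop : Tendsto (fun ε : ℝ => ∫ x in ε..T, ff ξ θ ((x:ℂ) + (Real.sqrt θ:ℝ)*Complex.I)) l
      (nhds (∫ x in (0:ℝ)..T, ff ξ θ ((x:ℂ) + (Real.sqrt θ:ℝ)*Complex.I))) := by
    have hcont := (cont_ff_top ξ θ hθ)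
    have hii : ∀ a b : ℝ, IntervalIntegrable (fun x : ℝ => ff ξ θ ((x:ℂ) + (Real.sqrt θ:ℝ)*Complex.I)) volume a b :=
      fun a b => hcont.intervalIntegrable a b
    have := tendsto_const_nhds (x := ∫ x in (0:ℝ)..T, ff ξ θ ((x:ℂ) + (Real.sqrt θ:ℝ)*Complex.I)) (f := l)
      |>.sub (tendsto_int_zero_eps_top ξ θ hξ0 hθ)
    rw [sub_zero] at this
    apply this.congr'
    filter_upwards [Ioo_mem_nhdsGT_of_mem (by constructor <;> [exact le_rfl; exact hT])] with ε hε
    rw [← intervalIntegral.integral_add_adjacent_intervals (hii 0 ε) (hii ε T)]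
    ring
  -- limit of left vertical
  have hleft := tendsto_left_vert ξ θ hξ0 hξ1 hθ
  -- combine
  have hcomb : Tendsto (fun ε : ℝ =>
      ((∫ x in ε..T, ff ξ θ ((x:ℂ) + (0:ℝ)*Complex.I)) -
        ∫ x in ε..T, ff ξ θ ((x:ℂ) + (Real.sqrt θ:ℝ)*Complex.I)) +
        Complex.I • (∫ y in (0:ℝ)..(Real.sqrt θ), ff ξ θ ((T:ℂ) + (y:ℂ)*Complex.I)) -
        Complex.I • (∫ y in (0:ℝ)..(Real.sqrt θ), ff ξ θ ((ε:ℂ) + (y:ℂ)*Complex.I))) l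
      (nhds ((((∫ x in (0:ℝ)..T, ff ξ θ (x:ℂ)) -
        ∫ x in (0:ℝ)..T, ff ξ θ ((x:ℂ) + (Real.sqrt θ:ℝ)*Complex.I)) +
        Complex.I • (∫ y in (0:ℝ)..(Real.sqrt θ), ff ξ θ ((T:ℂ) + (y:ℂ)*Complex.I)) -
        Complex.I • (∫ y in (0:ℝ)..(Real.sqrt θ), ff ξ θ (((0:ℝ):ℂ) + (y:ℂ)*Complex.I))))) := by
    have hbot' : Tendsto (fun ε : ℝ => ∫ x in ε..T, ff ξ θ ((x:ℂ) + (0:ℝ)*Complex.I)) l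
        (nhds (∫ x in (0:ℝ)..T, ff ξ θ (x:ℂ))) := by
      simpa using hbot
    exact ((hbot'.sub htop).add tendsto_const_nhds).sub (hleft.const_smul _)
  have hzero : Tendsto (fun _ : ℝ => (0:ℂ)) l (nhds 0) := tendsto_const_nhds
  have heq : (fun ε : ℝ =>
      ((∫ x in ε..T, ff ξ θ ((x:ℂ) + (0:ℝ)*Complex.I)) -
        ∫ x in ε..T, ff ξ θ ((x:ℂ) + (Real.sqrt θ:ℝ)*Complex.I)) +
        Complex.I • (∫ y in (0:ℝ)..(Real.sqrt θ), ff ξ θ ((T:ℂ) + (y:ℂ)*Complex.I)) -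
        Complex.I • (∫ y in (0:ℝ)..(Real.sqrt θ), ff ξ θ ((ε:ℂ) + (y:ℂ)*Complex.I))) =ᶠ[l]
      (fun _ : ℝ => (0:ℂ)) := by
    filter_upwards [Ioo_mem_nhdsGT_of_mem (by constructor <;> [exact le_rfl; exact hT])] with ε hε
    exact rect_identity ξ θ hξ0 T ε hε.1 hε.2.le
  have hfinal := tendsto_nhds_unique (hcomb.congr' heq) hzero
  have h0 := hfinal
  -- rearrange
  have := h0
  simp only [smul_eq_mul] at this ⊢
  linear_combination this

lemma tendsto_right_vert (ξ θ : ℝ) (hξ0 : 0 < ξ) (hξ1 : ξ < 1) (hθ : 0 < θ) :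
    Tendsto (fun T : ℝ => ∫ y in (0:ℝ)..(Real.sqrt θ), ff ξ θ ((T:ℂ) + (y:ℂ)*Complex.I))
      atTop (nhds 0) := by
  have hb : (0:ℝ) < Real.sqrt θ := Real.sqrt_pos.mpr hθ
  have key : Tendsto (fun T : ℝ => ∫ y in (0:ℝ)..(Real.sqrt θ), ff ξ θ ((T:ℂ) + (y:ℂ)*Complex.I))
      atTop (nhds (∫ y in (0:ℝ)..(Real.sqrt θ), (0:ℂ))) := by
    apply intervalIntegral.tendsto_integral_filter_of_dominated_convergence
      (bound := fun y : ℝ => y^(-ξ))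
    · filter_upwards [eventually_gt_atTop (0:ℝ)] with T hT
      exact ((cont_ff_line ξ θ T hT).aestronglyMeasurable).restrict
    · filter_upwards [eventually_gt_atTop (0:ℝ)] with T hT
      filter_upwards [] with y hy
      rw [Set.uIoc_of_le hb.le] at hy
      refine (bound_vert ξ θ T y hξ0 hT.le hy.1 hy.2).trans ?_
      have h1 : Real.exp (-(T^2*y)) ≤ 1 := Real.exp_le_one_iff.mpr (by nlinarith [hy.1.le])
      nlinarith [Real.rpow_nonneg hy.1.le (-ξ), Real.exp_pos (-(T^2*y))]
    · exact intervalIntegral.intervalIntegrable_rpow' (by linarith)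
    · filter_upwards [] with y hy
      rw [Set.uIoc_of_le hb.le] at hy
      apply squeeze_zero_norm' (a := fun T : ℝ => Real.exp (-(T^2*y)) * y^(-ξ))
      · filter_upwards [eventually_ge_atTop (0:ℝ)] with T hT
        exact bound_vert ξ θ T y hξ0 hT hy.1 hy.2
      · have h2 : Tendsto (fun T : ℝ => T^2*y) atTop atTop :=
          (tendsto_pow_atTop (two_ne_zero)).atTop_mul_const hy.1
        have h3 : Tendsto (fun T : ℝ => Real.exp (-(T^2*y))) atTop (nhds 0) :=
          Real.tendsto_exp_atBot.comp (tendsto_neg_atBot_iff.mpr h2)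
        simpa using h3.mul_const (y^(-ξ))
  simpa using key

lemma tendsto_full_contour (ξ θ : ℝ) (hξ0 : 0 < ξ) (hξ1 : ξ < 1) (hθ : 0 < θ) :
    Tendsto (fun T : ℝ => ∫ x in (0:ℝ)..T, ff ξ θ (x:ℂ)) atTop
      (nhds ((∫ x in Set.Ioi (0:ℝ), ff ξ θ ((x:ℂ) + (Real.sqrt θ:ℝ)*Complex.I))
        + Complex.I • (∫ y in (0:ℝ)..(Real.sqrt θ), ff ξ θ (((0:ℝ):ℂ) + (y:ℂ)*Complex.I)))) := by
  have htop : Tendsto (fun T : ℝ => ∫ x in (0:ℝ)..T, ff ξ θ ((x:ℂ) + (Real.sqrt θ:ℝ)*Complex.I))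
      atTop (nhds (∫ x in Set.Ioi (0:ℝ), ff ξ θ ((x:ℂ) + (Real.sqrt θ:ℝ)*Complex.I))) :=
    intervalIntegral_tendsto_integral_Ioi 0 (integrableOn_ff_top ξ θ hξ0 hθ) tendsto_id
  have hright := (tendsto_right_vert ξ θ hξ0 hξ1 hθ).const_smul (Complex.I)
  have hcomb := (htop.sub hright).add
    (tendsto_const_nhds (x := Complex.I • (∫ y in (0:ℝ)..(Real.sqrt θ), ff ξ θ (((0:ℝ):ℂ) + (y:ℂ)*Complex.I))) (f := atTop))
  rw [smul_zero, sub_zero] at hcomb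
  apply hcomb.congr'
  filter_upwards [eventually_gt_atTop (0:ℝ)] with T hT
  exact (contour_identity ξ θ T hξ0 hξ1 hθ hT).symm

noncomputable def eee (ξ : ℝ) : ℂ := Complex.exp (Complex.I * ((ξ * π / 2 : ℝ) : ℂ))

lemma real_eq_re (ξ θ T : ℝ) (hξ0 : 0 < ξ) (hξ1 : ξ < 1) (hT : 0 ≤ T) :
    ∫ τ in (0:ℝ)..T, Real.cos (τ ^ 3 / 3 + θ * τ + ξ * π / 2) * τ ^ (-ξ)
      = (eee ξ * ∫ x in (0:ℝ)..T, ff ξ θ (x:ℂ)).re := by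
  have hint : IntervalIntegrable (fun x : ℝ => eee ξ * ff ξ θ (x:ℂ)) volume 0 T :=
    (intInt_real ξ θ T hξ0 hξ1 hT).const_mul _
  have step1 : ∫ τ in (0:ℝ)..T, Real.cos (τ ^ 3 / 3 + θ * τ + ξ * π / 2) * τ ^ (-ξ)
      = ∫ τ in (0:ℝ)..T, Complex.reCLM (eee ξ * ff ξ θ (τ:ℂ)) := by
    apply intervalIntegral.integral_congr_ae
    filter_upwards [] with τ
    intro hτ
    rw [Set.uIoc_of_le hT] at hτ
    have hτ0 : 0 < τ := hτ.1
    have hcpow : ((τ:ℂ)) ^ (-ξ:ℂ) = ((τ ^ (-ξ) : ℝ) : ℂ) := by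
      rw [Complex.ofReal_cpow hτ0.le]
      push_cast
      ring_nf
    have : eee ξ * ff ξ θ (τ:ℂ)
        = Complex.exp (((τ ^ 3 / 3 + θ * τ + ξ * π / 2 : ℝ) : ℂ) * Complex.I) * ((τ ^ (-ξ) : ℝ) : ℂ) := by
      rw [eee, ff, hcpow, ← mul_assoc, ← Complex.exp_add]
      congr 2
      push_cast
      ring
    rw [this]
    simp only [Complex.reCLM_apply, Complex.mul_re, Complex.ofReal_re, Complex.ofReal_im,
      mul_zero, sub_zero]
    rw [Complex.exp_ofReal_mul_I_re]
  rw [step1, ContinuousLinearMap.intervalIntegral_comp_comm _ hint]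
  simp [intervalIntegral.integral_const_mul]

lemma Lb_eq (ξ θ : ℝ) (hξ0 : 0 < ξ) (hξ1 : ξ < 1) (hθ : 0 < θ) (Lb : ℝ → ℝ)
    (hLb : Tendsto (fun T : ℝ => ∫ τ in (0:ℝ)..T,
        Real.cos (τ ^ 3 / 3 + θ * τ + ξ * π / 2) * τ ^ (-ξ)) atTop (nhds (Lb θ))) :
    Lb θ = (eee ξ * ((∫ x in Set.Ioi (0:ℝ), ff ξ θ ((x:ℂ) + (Real.sqrt θ:ℝ)*Complex.I))
        + Complex.I • (∫ y in (0:ℝ)..(Real.sqrt θ), ff ξ θ (((0:ℝ):ℂ) + (y:ℂ)*Complex.I)))).re := by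
  have h1 := tendsto_full_contour ξ θ hξ0 hξ1 hθ
  have h2 : Tendsto (fun T : ℝ => (eee ξ * ∫ x in (0:ℝ)..T, ff ξ θ (x:ℂ)).re) atTop
      (nhds ((eee ξ * ((∫ x in Set.Ioi (0:ℝ), ff ξ θ ((x:ℂ) + (Real.sqrt θ:ℝ)*Complex.I))
        + Complex.I • (∫ y in (0:ℝ)..(Real.sqrt θ), ff ξ θ (((0:ℝ):ℂ) + (y:ℂ)*Complex.I)))).re)) := by
    exact (Complex.continuous_re.tendsto _).comp ((tendsto_const_nhds.mul h1))
  have h3 : Tendsto (fun T : ℝ => ∫ τ in (0:ℝ)..T,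
      Real.cos (τ ^ 3 / 3 + θ * τ + ξ * π / 2) * τ ^ (-ξ)) atTop
      (nhds ((eee ξ * ((∫ x in Set.Ioi (0:ℝ), ff ξ θ ((x:ℂ) + (Real.sqrt θ:ℝ)*Complex.I))
        + Complex.I • (∫ y in (0:ℝ)..(Real.sqrt θ), ff ξ θ (((0:ℝ):ℂ) + (y:ℂ)*Complex.I)))).re)) := by
    apply h2.congr'
    filter_upwards [eventually_ge_atTop (0:ℝ)] with T hT
    exact (real_eq_re ξ θ T hξ0 hξ1 hT).symm
  exact tendsto_nhds_unique hLb h3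

lemma vert_integrand (ξ θ y : ℝ) (hy : 0 < y) :
    ff ξ θ (((0:ℝ):ℂ) + (y:ℂ)*Complex.I)
      = ((Real.exp (y^3/3 - θ*y) * y^(-ξ) : ℝ) : ℂ) * Complex.exp (-(Complex.I * ((ξ * π / 2 : ℝ) : ℂ))) := by
  have h0 : (((0:ℝ):ℂ) + (y:ℂ)*Complex.I) = (y:ℂ)*Complex.I := by simp
  have hyI : (y:ℂ)*Complex.I ≠ 0 := by
    simp [Complex.ext_iff, hy.ne']
  rw [ff, h0]
  have harg : Complex.I * (((y:ℂ)*Complex.I)^3/3 + (θ:ℂ)*((y:ℂ)*Complex.I))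
      = ((y^3/3 - θ*y : ℝ) : ℂ) := by
    apply Complex.ext <;> simp [pow_succ] <;> ring
  have hcpow : ((y:ℂ)*Complex.I) ^ (-ξ:ℂ)
      = ((y^(-ξ) : ℝ) : ℂ) * Complex.exp (-(Complex.I * ((ξ * π / 2 : ℝ) : ℂ))) := by
    rw [Complex.cpow_def_of_ne_zero hyI, Complex.log_ofReal_mul hy Complex.I_ne_zero,
      Complex.log_I, add_mul, Complex.exp_add]
    congr 1
    · rw [Real.rpow_def_of_pos hy, Complex.ofReal_exp]
      push_cast; ring_nf
    · congr 1
      push_cast; ring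
  rw [harg, hcpow, ← Complex.ofReal_exp]
  push_cast
  ring

lemma Lb_eq_horiz (ξ θ : ℝ) (hξ0 : 0 < ξ) (hξ1 : ξ < 1) (hθ : 0 < θ) (Lb : ℝ → ℝ)
    (hLb : Tendsto (fun T : ℝ => ∫ τ in (0:ℝ)..T,
        Real.cos (τ ^ 3 / 3 + θ * τ + ξ * π / 2) * τ ^ (-ξ)) atTop (nhds (Lb θ))) :
    Lb θ = (eee ξ * (∫ x in Set.Ioi (0:ℝ), ff ξ θ ((x:ℂ) + (Real.sqrt θ:ℝ)*Complex.I))).re := by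
  rw [Lb_eq ξ θ hξ0 hξ1 hθ Lb hLb]
  have hb : (0:ℝ) < Real.sqrt θ := Real.sqrt_pos.mpr hθ
  -- compute the vertical integral
  have hJV : (∫ y in (0:ℝ)..(Real.sqrt θ), ff ξ θ (((0:ℝ):ℂ) + (y:ℂ)*Complex.I))
      = Complex.exp (-(Complex.I * ((ξ * π / 2 : ℝ) : ℂ)))
        * ((∫ y in (0:ℝ)..(Real.sqrt θ), Real.exp (y^3/3 - θ*y) * y^(-ξ) : ℝ) : ℂ) := by
    have : (∫ y in (0:ℝ)..(Real.sqrt θ), ff ξ θ (((0:ℝ):ℂ) + (y:ℂ)*Complex.I))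
        = ∫ y in (0:ℝ)..(Real.sqrt θ),
          Complex.exp (-(Complex.I * ((ξ * π / 2 : ℝ) : ℂ))) * ((Real.exp (y^3/3 - θ*y) * y^(-ξ) : ℝ) : ℂ) := by
      apply intervalIntegral.integral_congr_ae
      filter_upwards [] with y hy
      rw [Set.uIoc_of_le hb.le] at hy
      rw [vert_integrand ξ θ y hy.1]
      ring
    rw [this, intervalIntegral.integral_const_mul, intervalIntegral.integral_ofReal]
  rw [hJV]
  set r : ℝ := ∫ y in (0:ℝ)..(Real.sqrt θ), Real.exp (y^3/3 - θ*y) * y^(-ξ)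
  set JH : ℂ := ∫ x in Set.Ioi (0:ℝ), ff ξ θ ((x:ℂ) + (Real.sqrt θ:ℝ)*Complex.I)
  have hsimp : eee ξ * (JH + Complex.I • (Complex.exp (-(Complex.I * ((ξ * π / 2 : ℝ) : ℂ))) * (r:ℂ)))
      = eee ξ * JH + Complex.I * (r:ℂ) := by
    rw [smul_eq_mul, eee]
    rw [mul_add]
    congr 1
    rw [show Complex.exp (Complex.I * ((ξ * π / 2 : ℝ) : ℂ)) *
        (Complex.I * (Complex.exp (-(Complex.I * ((ξ * π / 2 : ℝ) : ℂ))) * (r:ℂ)))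
      = Complex.exp (Complex.I * ((ξ * π / 2 : ℝ) : ℂ)) * Complex.exp (-(Complex.I * ((ξ * π / 2 : ℝ) : ℂ)))
        * (Complex.I * (r:ℂ)) from by ring, ← Complex.exp_add, add_neg_cancel, Complex.exp_zero, one_mul]
  rw [hsimp]
  simp

noncomputable def GG (ξ θ : ℝ) (x : ℝ) : ℂ :=
  Complex.exp (((-(Real.sqrt θ * x^2) : ℝ) : ℂ) + Complex.I*((ξ*π/2 + x^3/3 : ℝ):ℂ))
    * ((x:ℂ) + (Real.sqrt θ:ℝ)*Complex.I)^(-ξ:ℂ)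

lemma top_integrand (ξ θ x : ℝ) (hθ : 0 < θ) :
    eee ξ * ff ξ θ ((x:ℂ) + (Real.sqrt θ:ℝ)*Complex.I)
      = ((Real.exp (-(2/3)*(θ*Real.sqrt θ)) : ℝ) : ℂ) * GG ξ θ x := by
  set b := Real.sqrt θ with hbdef
  have hb2 : b^2 = θ := Real.sq_sqrt hθ.le
  rw [eee, ff, GG, ← mul_assoc, ← Complex.exp_add, arg_decomp θ x b]
  rw [show Complex.I * ((ξ * π / 2 : ℝ) : ℂ) +
      (((-(x^2*b - b^3/3 + θ*b) : ℝ) : ℂ) + ((x^3/3 - x*b^2 + θ*x : ℝ) : ℂ)*Complex.I)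
    = ((-(2/3)*(θ*b) : ℝ) : ℂ) + (((-(b * x^2) : ℝ) : ℂ) + Complex.I*((ξ*π/2 + x^3/3 : ℝ):ℂ)) from ?_]
  · rw [Complex.exp_add, ← Complex.ofReal_exp]
    ring
  · have hb3 : b^3 = θ*b := by linear_combination b * hb2
    apply Complex.ext
    · simp [← Complex.ofReal_pow]
      linear_combination hb3/3
    · simp [← Complex.ofReal_pow]
      linear_combination -x*hb2

lemma Lb_gauss (ξ θ : ℝ) (hξ0 : 0 < ξ) (hξ1 : ξ < 1) (hθ : 0 < θ) (Lb : ℝ → ℝ)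
    (hLb : Tendsto (fun T : ℝ => ∫ τ in (0:ℝ)..T,
        Real.cos (τ ^ 3 / 3 + θ * τ + ξ * π / 2) * τ ^ (-ξ)) atTop (nhds (Lb θ))) :
    Lb θ * Real.exp ((2/3)*(θ*Real.sqrt θ))
      = (∫ x in Set.Ioi (0:ℝ), GG ξ θ x).re := by
  rw [Lb_eq_horiz ξ θ hξ0 hξ1 hθ Lb hLb]
  have h1 : eee ξ * (∫ x in Set.Ioi (0:ℝ), ff ξ θ ((x:ℂ) + (Real.sqrt θ:ℝ)*Complex.I))
      = ((Real.exp (-(2/3)*(θ*Real.sqrt θ)) : ℝ) : ℂ) * ∫ x in Set.Ioi (0:ℝ), GG ξ θ x := by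
    rw [← MeasureTheory.integral_const_mul, ← MeasureTheory.integral_const_mul]
    apply MeasureTheory.integral_congr_ae
    filter_upwards [] with x
    exact top_integrand ξ θ x hθ
  rw [h1]
  rw [show (((Real.exp (-(2/3)*(θ*Real.sqrt θ)) : ℝ) : ℂ) * ∫ x in Set.Ioi (0:ℝ), GG ξ θ x).re
    = Real.exp (-(2/3)*(θ*Real.sqrt θ)) * (∫ x in Set.Ioi (0:ℝ), GG ξ θ x).re from by
      simp only [Complex.mul_re, Complex.ofReal_re, Complex.ofReal_im, zero_mul, sub_zero]]
  rw [mul_comm (Real.exp (-(2/3)*(θ*Real.sqrt θ))), mul_assoc, ← Real.exp_add]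
  norm_num

lemma cpow_real_scale {ξ : ℝ} (r : ℝ) (hr : 0 < r) (w : ℂ) (hw : w ≠ 0) :
    ((r:ℂ) * w) ^ (-ξ : ℂ) = ((r ^ (-ξ) : ℝ) : ℂ) * w ^ (-ξ : ℂ) := by
  rw [Complex.cpow_def_of_ne_zero (mul_ne_zero (by exact_mod_cast hr.ne') hw),
    Complex.cpow_def_of_ne_zero hw, Complex.log_ofReal_mul hr hw, add_mul, Complex.exp_add]
  congr 1
  rw [Real.rpow_def_of_pos hr, Complex.ofReal_exp]
  push_cast
  ring_nf

noncomputable def HH (ξ θ : ℝ) (u : ℝ) : ℂ :=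
  Complex.exp (((-(u^2) : ℝ) : ℂ) + Complex.I*((ξ*π/2 + θ^(-(3:ℝ)/4)*u^3/3 : ℝ):ℂ))
    * (((θ^(-(3:ℝ)/4)*u : ℝ):ℂ) + Complex.I)^(-ξ:ℂ)

lemma scaled_integrand (ξ θ u : ℝ) (hθ : 0 < θ) :
    ((θ^(ξ/2) : ℝ)) • GG ξ θ (θ^(-(1:ℝ)/4) * u) = HH ξ θ u := by
  have hb : (0:ℝ) < Real.sqrt θ := Real.sqrt_pos.mpr hθ
  have hsqrt : Real.sqrt θ = θ^((1:ℝ)/2) := by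
    rw [Real.sqrt_eq_rpow]
  have hsq : Real.sqrt θ * (θ^(-(1:ℝ)/4) * u)^2 = u^2 := by
    rw [mul_pow, ← Real.rpow_natCast (θ^(-(1:ℝ)/4)) 2, ← Real.rpow_mul hθ.le, hsqrt,
      ← mul_assoc, ← Real.rpow_add hθ]
    norm_num
  have hcube : (θ^(-(1:ℝ)/4) * u)^3 = θ^(-(3:ℝ)/4)*u^3 := by
    rw [mul_pow, ← Real.rpow_natCast (θ^(-(1:ℝ)/4)) 3, ← Real.rpow_mul hθ.le]
    norm_num
  have hbase : ((θ^(-(1:ℝ)/4)*u : ℝ):ℂ) + ((Real.sqrt θ : ℝ):ℂ)*Complex.I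
      = ((Real.sqrt θ : ℝ):ℂ) * ((((θ^(-(3:ℝ)/4)*u : ℝ)):ℂ) + Complex.I) := by
    have hr : Real.sqrt θ * (θ^(-(3:ℝ)/4)*u) = θ^(-(1:ℝ)/4)*u := by
      rw [hsqrt, ← mul_assoc, ← Real.rpow_add hθ]
      norm_num
    rw [← hr]
    push_cast
    ring
  have hwne : ((((θ^(-(3:ℝ)/4)*u : ℝ)):ℂ) + Complex.I) ≠ 0 := by
    intro h
    have := congrArg Complex.im h
    simp at this
  have hpow : θ^(ξ/2) * (Real.sqrt θ)^(-ξ) = 1 := by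
    rw [hsqrt, ← Real.rpow_mul hθ.le, ← Real.rpow_add hθ,
      show ξ/2 + 1/2 * -ξ = 0 by ring, Real.rpow_zero]
  rw [GG, HH, hsq, hcube, hbase, cpow_real_scale (Real.sqrt θ) hb _ hwne, Complex.real_smul]
  rw [show (((θ^(ξ/2):ℝ):ℂ) * (Complex.exp (((-(u^2) : ℝ) : ℂ)
        + Complex.I*((ξ*π/2 + θ^(-(3:ℝ)/4)*u^3/3 : ℝ):ℂ))
      * (((Real.sqrt θ^(-ξ):ℝ):ℂ) * ((((θ^(-(3:ℝ)/4)*u : ℝ)):ℂ) + Complex.I)^(-ξ:ℂ))))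
    = (((θ^(ξ/2) * Real.sqrt θ^(-ξ) :ℝ):ℂ)) * (Complex.exp (((-(u^2) : ℝ) : ℂ)
        + Complex.I*((ξ*π/2 + θ^(-(3:ℝ)/4)*u^3/3 : ℝ):ℂ))
      * (((((θ^(-(3:ℝ)/4)*u : ℝ)):ℂ) + Complex.I)^(-ξ:ℂ))) from by push_cast; ring]
  rw [hpow]
  simp

lemma key_identity (ξ θ : ℝ) (hξ0 : 0 < ξ) (hξ1 : ξ < 1) (hθ : 0 < θ) (Lb : ℝ → ℝ)
    (hLb : Tendsto (fun T : ℝ => ∫ τ in (0:ℝ)..T,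
        Real.cos (τ ^ 3 / 3 + θ * τ + ξ * π / 2) * τ ^ (-ξ)) atTop (nhds (Lb θ))) :
    Lb θ * θ ^ (3 / 4 - (1 - ξ) / 2) * Real.exp (2 * θ ^ ((3 : ℝ) / 2) / 3)
      = (∫ u in Set.Ioi (0:ℝ), HH ξ θ u).re := by
  have hexp32 : θ ^ ((3:ℝ)/2) = θ * Real.sqrt θ := by
    rw [show (3:ℝ)/2 = 1 + 1/2 by norm_num, Real.rpow_add hθ, Real.rpow_one, ← Real.sqrt_eq_rpow]
  have hq : (0:ℝ) < θ^(-(1:ℝ)/4) := Real.rpow_pos_of_pos hθ _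
  -- substitution
  have hsubst : (∫ x in Set.Ioi (0:ℝ), GG ξ θ x)
      = (θ^(-(1:ℝ)/4)) • ∫ u in Set.Ioi (0:ℝ), GG ξ θ (θ^(-(1:ℝ)/4) * u) := by
    rw [integral_comp_mul_left_Ioi (GG ξ θ) 0 hq, mul_zero, smul_smul]
    rw [mul_inv_cancel₀ hq.ne', one_smul]
  -- HH integral
  have hHH : (∫ u in Set.Ioi (0:ℝ), HH ξ θ u)
      = (θ^(ξ/2) : ℝ) • ∫ u in Set.Ioi (0:ℝ), GG ξ θ (θ^(-(1:ℝ)/4) * u) := by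
    rw [← MeasureTheory.integral_smul]
    apply MeasureTheory.integral_congr_ae
    filter_upwards [] with u
    exact (scaled_integrand ξ θ u hθ).symm
  have hLbG := Lb_gauss ξ θ hξ0 hξ1 hθ Lb hLb
  rw [hsubst] at hLbG
  rw [hHH]
  simp only [Complex.smul_re, smul_eq_mul] at hLbG ⊢
  have hrpowadd : θ ^ (3 / 4 - (1 - ξ) / 2) * θ^(-(1:ℝ)/4) = θ^(ξ/2) := by
    rw [← Real.rpow_add hθ]
    congr 1
    ring
  have h2 : Lb θ * Real.exp (2 * θ ^ ((3 : ℝ) / 2) / 3) = Real.exp ((2/3)*(θ*Real.sqrt θ)) * Lb θ := by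
    rw [hexp32]; ring_nf
  calc Lb θ * θ ^ (3 / 4 - (1 - ξ) / 2) * Real.exp (2 * θ ^ ((3 : ℝ) / 2) / 3)
      = (Lb θ * Real.exp ((2/3)*(θ*Real.sqrt θ))) * θ ^ (3 / 4 - (1 - ξ) / 2) := by
        rw [hexp32]; ring
    _ = (θ^(-(1:ℝ)/4) * (∫ u in Set.Ioi (0:ℝ), GG ξ θ (θ^(-(1:ℝ)/4) * u)).re) * θ ^ (3 / 4 - (1 - ξ) / 2) := by
        rw [hLbG]
    _ = (θ ^ (3 / 4 - (1 - ξ) / 2) * θ^(-(1:ℝ)/4)) * (∫ u in Set.Ioi (0:ℝ), GG ξ θ (θ^(-(1:ℝ)/4) * u)).re := by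
        ring
    _ = θ^(ξ/2) * (∫ u in Set.Ioi (0:ℝ), GG ξ θ (θ^(-(1:ℝ)/4) * u)).re := by
        rw [hrpowadd]

lemma norm_HH_le (ξ θ u : ℝ) (hξ0 : 0 < ξ) :
    ‖HH ξ θ u‖ ≤ Real.exp (-(u^2)) := by
  rw [HH, norm_mul]
  have h1 : ‖Complex.exp (((-(u^2) : ℝ) : ℂ)
      + Complex.I*((ξ*π/2 + θ^(-(3:ℝ)/4)*u^3/3 : ℝ):ℂ))‖ = Real.exp (-(u^2)) := by
    rw [Complex.norm_exp]
    congr 1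
    simp [← Complex.ofReal_pow]
  rw [h1]
  have h2 : ‖(((θ^(-(3:ℝ)/4)*u : ℝ):ℂ) + Complex.I)‖ ≥ 1 := by
    have := Complex.abs_im_le_norm ((((θ^(-(3:ℝ)/4)*u : ℝ):ℂ) + Complex.I))
    simpa using this
  have h3 : ‖(((θ^(-(3:ℝ)/4)*u : ℝ):ℂ) + Complex.I)^(-ξ:ℂ)‖
      = ‖(((θ^(-(3:ℝ)/4)*u : ℝ):ℂ) + Complex.I)‖ ^ (-ξ) := by
    rw [Complex.norm_cpow_of_ne_zero]
    · simp
    · intro h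
      have := congrArg Complex.im h
      simp at this
  rw [h3]
  have h4 : ‖(((θ^(-(3:ℝ)/4)*u : ℝ):ℂ) + Complex.I)‖ ^ (-ξ) ≤ 1 :=
    Real.rpow_le_one_of_one_le_of_nonpos h2 (neg_nonpos.mpr hξ0.le)
  nlinarith [Real.exp_pos (-(u^2)), Real.rpow_nonneg (le_trans zero_le_one h2) (-ξ)]

lemma cont_HH (ξ θ : ℝ) : Continuous (fun u : ℝ => HH ξ θ u) := by
  apply Continuous.mul
  · fun_prop
  · rw [continuous_iff_continuousAt]
    intro u
    apply (continuousAt_cpow_const _).comp (by fun_prop)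
    refine Complex.mem_slitPlane_iff.mpr (Or.inr ?_)
    simp

lemma tendsto_HH_pointwise (ξ : ℝ) (hξ0 : 0 < ξ) (u : ℝ) :
    Tendsto (fun θ : ℝ => HH ξ θ u) atTop (nhds ((Real.exp (-(u^2)) : ℝ) : ℂ)) := by
  set Φ : ℝ → ℂ := fun c => Complex.exp (((-(u^2) : ℝ) : ℂ) + Complex.I*((ξ*π/2 + c*u^3/3 : ℝ):ℂ))
    * (((c*u : ℝ):ℂ) + Complex.I)^(-ξ:ℂ) with hΦ
  have hc : Tendsto (fun θ : ℝ => θ^(-(3:ℝ)/4)) atTop (nhds 0) := by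
    have := tendsto_rpow_neg_atTop (show (0:ℝ) < 3/4 by norm_num)
    apply this.congr
    intro θ
    norm_num
  have hΦcont : ContinuousAt Φ 0 := by
    apply ContinuousAt.mul
    · fun_prop
    · apply ContinuousAt.comp (x := (0:ℝ))
        (g := fun z : ℂ => z ^ (-ξ:ℂ)) (f := fun c : ℝ => (((c*u : ℝ):ℂ) + Complex.I))
      · apply continuousAt_cpow_const
        refine Complex.mem_slitPlane_iff.mpr (Or.inr ?_)
        simp
      · fun_prop
  have hΦ0 : Φ 0 = ((Real.exp (-(u^2)) : ℝ) : ℂ) := by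
    rw [hΦ]
    simp only [zero_mul, Complex.ofReal_zero, zero_add, zero_div, add_zero]
    norm_num
    rw [Complex.cpow_def_of_ne_zero Complex.I_ne_zero, Complex.log_I,
      ← Complex.exp_add]
    congr 1
    push_cast
    ring
  have := (hΦcont.tendsto).comp hc
  rw [hΦ0] at this
  apply this.congr
  intro θ
  rw [HH, hΦ]
  norm_num

lemma tendsto_HH_integral (ξ : ℝ) (hξ0 : 0 < ξ) :
    Tendsto (fun θ : ℝ => ∫ u in Set.Ioi (0:ℝ), HH ξ θ u) atTop
      (nhds (((Real.sqrt π / 2 : ℝ) : ℂ))) := by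
  have hval : (∫ u in Set.Ioi (0:ℝ), ((Real.exp (-(u^2)) : ℝ) : ℂ))
      = ((Real.sqrt π / 2 : ℝ) : ℂ) := by
    rw [show (∫ u in Set.Ioi (0:ℝ), ((Real.exp (-(u^2)) : ℝ) : ℂ))
        = ((∫ u in Set.Ioi (0:ℝ), Real.exp (-(u^2)) : ℝ) : ℂ) from integral_ofReal (𝕜 := ℂ)]
    congr 1
    have : ∀ u : ℝ, Real.exp (-(u^2)) = Real.exp (-1*u^2) := by intro u; norm_num
    rw [MeasureTheory.setIntegral_congr_fun measurableSet_Ioi (fun u _ => this u)]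
    rw [integral_gaussian_Ioi 1]
    norm_num
  rw [← hval]
  apply MeasureTheory.tendsto_integral_filter_of_dominated_convergence
    (bound := fun u : ℝ => Real.exp (-(u^2)))
  · filter_upwards [] with θ
    exact (cont_HH ξ θ).aestronglyMeasurable.restrict
  · filter_upwards [] with θ
    filter_upwards [] with u
    exact norm_HH_le ξ θ u hξ0
  · have : MeasureTheory.Integrable (fun u : ℝ => Real.exp (-1*u^2)) :=
      integrable_exp_neg_mul_sq one_pos
    apply (this.congr ?_).integrableOn
    filter_upwards [] with u
    norm_num
  · filter_upwards [] with u
    exact tendsto_HH_pointwise ξ hξ0 u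


end LbAux

/-- For `ξ ∈ (0,1)` and `Lb_ξ` the improper Riemann integral
`lim_{T→∞} ∫₀^T cos(τ³/3 + θτ + ξπ/2) τ^{−ξ} dτ`, one has
`Lb_ξ(θ) · θ^{3/4 − (1−ξ)/2} · exp(2θ^{3/2}/3) → √π/2` as `θ → +∞`. -/
theorem Lb_asymptotics_pos_infty (ξ : ℝ) (hξ : ξ ∈ Set.Ioo (0 : ℝ) 1)
    (Lb : ℝ → ℝ)
    (hLb : ∀ θ : ℝ, Tendsto
      (fun T : ℝ => ∫ τ in (0 : ℝ)..T,
        Real.cos (τ ^ 3 / 3 + θ * τ + ξ * π / 2) * τ ^ (-ξ))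
      atTop (nhds (Lb θ))) :
    Tendsto (fun θ : ℝ =>
      Lb θ * θ ^ (3 / 4 - (1 - ξ) / 2) * Real.exp (2 * θ ^ ((3 : ℝ) / 2) / 3))
      atTop (nhds (Real.sqrt π / 2)) := by
  obtain ⟨hξ0, hξ1⟩ := hξ
  have h1 : Tendsto (fun θ : ℝ => (∫ u in Set.Ioi (0:ℝ), HH ξ θ u).re) atTop
      (nhds (Real.sqrt π / 2)) := by
    have := (Complex.continuous_re.tendsto _).comp (tendsto_HH_integral ξ hξ0)
    exact this
  apply h1.congr'
  filter_upwards [eventually_gt_atTop (0:ℝ)] with θ hθ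
  exact (key_identity ξ θ hξ0 hξ1 hθ Lb (hLb θ)).symm
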